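/- Let S and A be finite sets, γ ∈ (0,1), P : S × A × S → ℝ with P(y|x,a) ≥ 0 and Σ_y P(y|x,a) = 1, and c : S × A → ℝ. Let θ ↦ μ(a|x;θ) (θ ∈ ℝ^κ) be differentiable with μ(a|x;θ) ≥ 0 and Σ_a μ(a|x;θ) = 1 for all x, θ. Define the induced transition matrix P_θ(x,y) = Σ_a μ(a|x;θ)P(y|x,a), cost c_θ(x) = Σ_a μ(a|x;θ)c(x,a), value function V^θ = (I − γP_θ)⁻¹ c_θ, and action-value function Q^θ(x,a) = c(x,a) + γ Σ_y P(y|x,a) V^θ(y). Then for every x⁰ ∈ S, θ ↦ V^θ(x⁰) is differentiable and ∇_θ V^θ(x⁰) = Σ_{k=0}^{∞} γᵏ Σ_{x∈S} (P_θᵏ)(x⁰,x) Σ_{a∈A} ∇_θ μ(a|x;θ) · Q^θ(x,a); moreover the same formula holds with Q^θ(x,a) replaced by the advantage A^θ(x,a) = Q^θ(x,a) − V^θ(x). -/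

import Mathlib

set_option maxHeartbeats 1000000


/-- Policy gradient theorem for a finite discounted MDP: the value function
`θ ↦ V^θ(x⁰)` is differentiable and its gradient is
`Σ_k γᵏ Σ_x (P_θᵏ)(x⁰,x) Σ_a ∇_θ μ(a|x;θ) Q^θ(x,a)`, and the same formula holds with the
action-value function `Q^θ` replaced by the advantage `A^θ(x,a) = Q^θ(x,a) − V^θ(x)`. -/
theorem stmt5 {S A : Type*} [Fintype S] [Fintype A] [DecidableEq S] {κ : ℕ}
    (γ : ℝ) (hγ : γ ∈ Set.Ioo (0 : ℝ) 1)
    (P : S → A → S → ℝ) (hP0 : ∀ x a y, 0 ≤ P x a y) (hP1 : ∀ x a, ∑ y, P x a y = 1)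
    (c : S → A → ℝ)
    (μ : (Fin κ → ℝ) → S → A → ℝ)
    (hμdiff : ∀ x a, Differentiable ℝ fun θ => μ θ x a)
    (hμ0 : ∀ θ x a, 0 ≤ μ θ x a) (hμ1 : ∀ θ x, ∑ a, μ θ x a = 1)
    (Pθ : (Fin κ → ℝ) → Matrix S S ℝ)
    (hPθ : ∀ θ x y, Pθ θ x y = ∑ a, μ θ x a * P x a y)
    (cθ : (Fin κ → ℝ) → S → ℝ)
    (hcθ : ∀ θ x, cθ θ x = ∑ a, μ θ x a * c x a)
    (V : (Fin κ → ℝ) → S → ℝ)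
    (hV : ∀ θ, V θ = (1 - γ • Pθ θ)⁻¹.mulVec (cθ θ))
    (Q : (Fin κ → ℝ) → S → A → ℝ)
    (hQ : ∀ θ x a, Q θ x a = c x a + γ * ∑ y, P x a y * V θ y)
    (Adv : (Fin κ → ℝ) → S → A → ℝ)
    (hAdv : ∀ θ x a, Adv θ x a = Q θ x a - V θ x)
    (x0 : S) (θ : Fin κ → ℝ) :
    DifferentiableAt ℝ (fun θ' => V θ' x0) θ ∧
    fderiv ℝ (fun θ' => V θ' x0) θ =
      ∑' k : ℕ, γ ^ k •
        ∑ x, ((Pθ θ) ^ k) x0 x • ∑ a, Q θ x a • fderiv ℝ (fun θ' => μ θ' x a) θ ∧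
    fderiv ℝ (fun θ' => V θ' x0) θ =
      ∑' k : ℕ, γ ^ k •
        ∑ x, ((Pθ θ) ^ k) x0 x • ∑ a, Adv θ x a • fderiv ℝ (fun θ' => μ θ' x a) θ := by
  obtain ⟨hγ0, hγ1⟩ := hγ
  letI : NormedRing (Matrix S S ℝ) := Matrix.linftyOpNormedRing
  letI : NormedAlgebra ℝ (Matrix S S ℝ) := Matrix.linftyOpNormedAlgebra
  haveI : CompleteSpace (Matrix S S ℝ) := FiniteDimensional.complete ℝ _
  -- entry evaluation bound and CLM
  have hb : ∀ (M : Matrix S S ℝ) (x y : S), ‖M x y‖ ≤ ‖M‖ := by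
    intro M x y
    have h : ‖M x y‖₊ ≤ ‖M‖₊ := by
      rw [Matrix.linfty_opNNNorm_def]
      exact le_trans (Finset.single_le_sum (f := fun j => ‖M x j‖₊) (fun j _ => zero_le)
        (Finset.mem_univ y))
        (Finset.le_sup (f := fun i => ∑ j, ‖M i j‖₊) (Finset.mem_univ x))
    exact h
  let eCLM : S → S → Matrix S S ℝ →L[ℝ] ℝ := fun x y =>
    LinearMap.mkContinuous
      { toFun := fun M => M x y
        map_add' := fun _ _ => rfl
        map_smul' := fun _ _ => rfl } 1
      (fun M => by rw [one_mul]; exact hb M x y)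
  have heCLM : ∀ x y (M : Matrix S S ℝ), eCLM x y M = M x y := fun _ _ _ => rfl
  -- basic facts about Pθ
  have hPθ0 : ∀ θ' x y, 0 ≤ Pθ θ' x y := by
    intro θ' x y
    rw [hPθ]
    exact Finset.sum_nonneg fun a _ => mul_nonneg (hμ0 θ' x a) (hP0 x a y)
  have hPθ1 : ∀ θ' x, ∑ y, Pθ θ' x y = 1 := by
    intro θ' x
    simp_rw [hPθ]
    rw [Finset.sum_comm]
    simp_rw [← Finset.mul_sum, hP1]
    simpa using hμ1 θ' x
  have hlt : ∀ θ', ‖γ • Pθ θ'‖ < 1 := by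
    intro θ'
    have hB : ‖Pθ θ'‖ ≤ 1 := by
      have h : ‖Pθ θ'‖₊ ≤ 1 := by
        rw [Matrix.linfty_opNNNorm_def]
        apply Finset.sup_le
        intro x _
        rw [← NNReal.coe_le_coe]
        push_cast
        have he : (∑ j, ‖Pθ θ' x j‖) = ∑ j, Pθ θ' x j := by
          refine Finset.sum_congr rfl fun j _ => ?_
          rw [Real.norm_eq_abs, abs_of_nonneg (hPθ0 θ' x j)]
        rw [he, hPθ1 θ' x]
      exact h
    rw [norm_smul, Real.norm_eq_abs, abs_of_pos hγ0]
    nlinarith [norm_nonneg (Pθ θ')]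
  set Mt : (Fin κ → ℝ) → Matrix S S ℝ := fun θ' => 1 - γ • Pθ θ' with hMtdef
  have hunit : ∀ θ', IsUnit (Mt θ') := fun θ' => isUnit_one_sub_of_norm_lt_one (hlt θ')
  have hdetunit : ∀ θ', IsUnit (Mt θ').det :=
    fun θ' => (Matrix.isUnit_iff_isUnit_det _).mp (hunit θ')
  -- M V = c, componentwise
  have hMV : ∀ θ' x, ∑ y, Mt θ' x y * V θ' y = cθ θ' x := by
    intro θ' x
    have h : (Mt θ').mulVec (V θ') = cθ θ' := by
      rw [hV θ', Matrix.mulVec_mulVec, Matrix.mul_nonsing_inv _ (hdetunit θ'),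
        Matrix.one_mulVec]
    simpa [Matrix.mulVec, dotProduct] using congrFun h x
  -- differentiability of the pieces
  have hcθdiff : ∀ x, Differentiable ℝ fun θ' => cθ θ' x := by
    intro x
    have h : (fun θ' => cθ θ' x) = fun θ' => ∑ a, μ θ' x a * c x a :=
      funext fun θ' => hcθ θ' x
    rw [h]
    exact Differentiable.fun_sum fun a _ => (hμdiff x a).mul_const _
  have hMrep : ∀ x y, (fun θ' => Mt θ' x y)
      = fun θ' => (1 : Matrix S S ℝ) x y - γ * ∑ a, μ θ' x a * P x a y := by
    intro x y
    funext θ'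
    simp only [hMtdef, Matrix.sub_apply, Matrix.smul_apply, smul_eq_mul, hPθ]
  have hMdiffE : ∀ x y, Differentiable ℝ fun θ' => Mt θ' x y := by
    intro x y
    rw [hMrep]
    exact (differentiable_const _).sub
      ((Differentiable.fun_sum fun a _ => (hμdiff x a).mul_const _).const_mul γ)
  have hMdiff : Differentiable ℝ Mt := by
    have hrep : Mt = fun θ' => (1 : Matrix S S ℝ) -
        γ • ∑ x : S, ∑ a : A, μ θ' x a •
          (Matrix.of fun x' y => if x' = x then P x a y else 0) := by
      funext θ'
      ext x' y
      simp only [hMtdef]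
      simp [Matrix.sub_apply, Matrix.smul_apply, smul_eq_mul, hPθ, Matrix.sum_apply,
        mul_ite, mul_zero, Finset.sum_ite_eq]
    rw [hrep]
    exact (differentiable_const _).sub
      ((Differentiable.fun_sum fun x _ => Differentiable.fun_sum fun a _ =>
        (hμdiff x a).smul_const _).const_smul γ)
  have hinvdiff : Differentiable ℝ fun θ' => (Mt θ')⁻¹ := by
    have h : (fun θ' => (Mt θ')⁻¹) = fun θ' => Ring.inverse (Mt θ') :=
      funext fun θ' => Matrix.nonsing_inv_eq_ringInverse _
    rw [h]
    exact hMdiff.inverse hunit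
  have hinvE : ∀ x y, Differentiable ℝ fun θ' => (Mt θ')⁻¹ x y := by
    intro x y
    exact ((eCLM x y).differentiable).comp hinvdiff
  have hVdiff : ∀ y, Differentiable ℝ fun θ' => V θ' y := by
    intro y
    have h : (fun θ' => V θ' y) = fun θ' => ∑ z, (Mt θ')⁻¹ y z * cθ θ' z := by
      funext θ'
      rw [hV θ']
      simp [Matrix.mulVec, dotProduct]
      rfl
    rw [h]
    exact Differentiable.fun_sum fun z _ => (hinvE y z).mul (hcθdiff z)
  -- derivative computations
  have hDc : ∀ x, fderiv ℝ (fun θ' => cθ θ' x) θ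
      = ∑ a, c x a • fderiv ℝ (fun θ' => μ θ' x a) θ := by
    intro x
    have h : (fun θ' => cθ θ' x) = fun θ' => ∑ a, μ θ' x a * c x a :=
      funext fun θ' => hcθ θ' x
    rw [h, fderiv_fun_sum fun a _ => ((hμdiff x a) θ).mul_const _]
    exact Finset.sum_congr rfl fun a _ => fderiv_mul_const ((hμdiff x a) θ) _
  have hDM : ∀ x y, fderiv ℝ (fun θ' => Mt θ' x y) θ
      = -(γ • ∑ a, P x a y • fderiv ℝ (fun θ' => μ θ' x a) θ) := by
    intro x y
    rw [hMrep]
    have hs : DifferentiableAt ℝ (fun θ' => ∑ a, μ θ' x a * P x a y) θ :=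
      DifferentiableAt.fun_sum fun a _ => ((hμdiff x a) θ).mul_const _
    rw [fderiv_const_sub _, fderiv_const_mul hs γ,
      fderiv_fun_sum fun a _ => ((hμdiff x a) θ).mul_const _]
    congr 1
    congr 1
    exact Finset.sum_congr rfl fun a _ => fderiv_mul_const ((hμdiff x a) θ) _
  -- the key linear equation
  have hkey : ∀ x, ∑ y, Mt θ x y • fderiv ℝ (fun θ' => V θ' y) θ
      = ∑ a, Q θ x a • fderiv ℝ (fun θ' => μ θ' x a) θ := by
    intro x
    have hfun : (fun θ' => ∑ y, Mt θ' x y * V θ' y) = fun θ' => cθ θ' x :=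
      funext fun θ' => hMV θ' x
    have h2 : ∑ y, (Mt θ x y • fderiv ℝ (fun θ' => V θ' y) θ
        + V θ y • fderiv ℝ (fun θ' => Mt θ' x y) θ)
        = ∑ a, c x a • fderiv ℝ (fun θ' => μ θ' x a) θ := by
      rw [← hDc x, ← hfun, fderiv_fun_sum fun y _ => ((hMdiffE x y) θ).fun_mul ((hVdiff y) θ)]
      exact Finset.sum_congr rfl fun y _ => (fderiv_fun_mul ((hMdiffE x y) θ) ((hVdiff y) θ)).symm
    simp only [hDM] at h2
    rw [Finset.sum_add_distrib] at h2
    have h3 : ∑ y, Mt θ x y • fderiv ℝ (fun θ' => V θ' y) θ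
        = ∑ a, c x a • fderiv ℝ (fun θ' => μ θ' x a) θ
          + ∑ y, V θ y • (γ • ∑ a, P x a y • fderiv ℝ (fun θ' => μ θ' x a) θ) := by
      rw [← h2]
      simp [smul_neg]
    rw [h3]
    -- now show RHS = Σ_a Q • Dμ
    simp only [hQ, add_smul, Finset.sum_add_distrib]
    congr 1
    -- Σ_y V θ y • (γ • Σ_a P x a y • Dμ) = Σ_a (γ * Σ_y P x a y * V θ y) • Dμ
    have l : ∀ a, (γ * ∑ y, P x a y * V θ y) • fderiv ℝ (fun θ' => μ θ' x a) θ
        = ∑ y, (γ * (P x a y * V θ y)) • fderiv ℝ (fun θ' => μ θ' x a) θ := by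
      intro a
      rw [Finset.mul_sum, Finset.sum_smul]
    simp only [l]
    rw [Finset.sum_comm]
    refine Finset.sum_congr rfl fun y _ => ?_
    rw [Finset.smul_sum, Finset.smul_sum]
    refine Finset.sum_congr rfl fun a _ => ?_
    simp only [smul_smul]
    congr 1
    ring
  -- invert the linear equation
  have hDx0 : fderiv ℝ (fun θ' => V θ' x0) θ
      = ∑ x, (Mt θ)⁻¹ x0 x • ∑ a, Q θ x a • fderiv ℝ (fun θ' => μ θ' x a) θ := by
    have h1 : ∀ y, ((Mt θ)⁻¹ * Mt θ) x0 y = if x0 = y then (1:ℝ) else 0 := by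
      intro y
      rw [Matrix.nonsing_inv_mul _ (hdetunit θ), Matrix.one_apply]
    calc fderiv ℝ (fun θ' => V θ' x0) θ
        = ∑ y, (if x0 = y then (1:ℝ) else 0) • fderiv ℝ (fun θ' => V θ' y) θ := by
          symm
          rw [Finset.sum_eq_single x0 (fun y _ hy => by
            rw [if_neg fun h => hy h.symm, zero_smul])
            (fun h => absurd (Finset.mem_univ x0) h)]
          rw [if_pos rfl, one_smul]
      _ = ∑ y, ((Mt θ)⁻¹ * Mt θ) x0 y • fderiv ℝ (fun θ' => V θ' y) θ := by
          simp_rw [h1]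
      _ = ∑ y, ∑ x, ((Mt θ)⁻¹ x0 x * Mt θ x y) • fderiv ℝ (fun θ' => V θ' y) θ := by
          refine Finset.sum_congr rfl fun y _ => ?_
          rw [Matrix.mul_apply, Finset.sum_smul]
      _ = ∑ x, (Mt θ)⁻¹ x0 x • ∑ y, Mt θ x y • fderiv ℝ (fun θ' => V θ' y) θ := by
          rw [Finset.sum_comm]
          refine Finset.sum_congr rfl fun x _ => ?_
          rw [Finset.smul_sum]
          exact Finset.sum_congr rfl fun y _ => mul_smul _ _ _
      _ = ∑ x, (Mt θ)⁻¹ x0 x • ∑ a, Q θ x a • fderiv ℝ (fun θ' => μ θ' x a) θ :=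
          Finset.sum_congr rfl fun x _ => congrArg ((Mt θ)⁻¹ x0 x • ·) (hkey x)
  -- Neumann series for the inverse, entrywise
  have hHS : ∀ x, HasSum (fun k : ℕ => γ ^ k * ((Pθ θ) ^ k) x0 x) ((Mt θ)⁻¹ x0 x) := by
    intro x
    have hg : HasSum (fun k : ℕ => (γ • Pθ θ) ^ k) (Ring.inverse (Mt θ)) :=
      hasSum_geom_series_inverse _ (hlt θ)
    have h2 := hg.mapL (eCLM x0 x)
    have h3 : (fun k : ℕ => eCLM x0 x ((γ • Pθ θ) ^ k))
        = fun k : ℕ => γ ^ k * ((Pθ θ) ^ k) x0 x := by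
      funext k
      rw [heCLM, smul_pow]
      simp [Matrix.smul_apply, smul_eq_mul]
    rw [h3] at h2
    rw [Matrix.nonsing_inv_eq_ringInverse]
    exact h2
  -- assemble the Q-version of the formula
  have hfinal : fderiv ℝ (fun θ' => V θ' x0) θ
      = ∑' k : ℕ, γ ^ k •
        ∑ x, ((Pθ θ) ^ k) x0 x • ∑ a, Q θ x a • fderiv ℝ (fun θ' => μ θ' x a) θ := by
    rw [hDx0]
    have h1 : ∀ x, (Mt θ)⁻¹ x0 x • ∑ a, Q θ x a • fderiv ℝ (fun θ' => μ θ' x a) θ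
        = ∑' k : ℕ, (γ ^ k * ((Pθ θ) ^ k) x0 x) •
            ∑ a, Q θ x a • fderiv ℝ (fun θ' => μ θ' x a) θ := by
      intro x
      exact ((hHS x).smul_const _).tsum_eq.symm
    rw [Finset.sum_congr rfl fun x _ => h1 x]
    rw [← Summable.tsum_finsetSum fun x _ => ((hHS x).smul_const _).summable]
    refine tsum_congr fun k => ?_
    rw [Finset.smul_sum]
    exact Finset.sum_congr rfl fun x _ => mul_smul _ _ _
  -- advantage = Q in the formula
  have hDμ0 : ∀ x, (∑ a, fderiv ℝ (fun θ' => μ θ' x a) θ) = 0 := by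
    intro x
    have h2 := fderiv_fun_sum (x := θ) fun a (_ : a ∈ (Finset.univ : Finset A)) => (hμdiff x a) θ
    have h1 : (fun θ' => ∑ a, μ θ' x a) = fun _ => (1 : ℝ) := funext fun θ' => hμ1 θ' x
    rw [h1] at h2
    rw [← h2, fderiv_fun_const]
    rfl
  have hAdvQ : ∀ x, (∑ a, Adv θ x a • fderiv ℝ (fun θ' => μ θ' x a) θ)
      = ∑ a, Q θ x a • fderiv ℝ (fun θ' => μ θ' x a) θ := by
    intro x
    simp only [hAdv, sub_smul]
    rw [Finset.sum_congr rfl fun a _ => sub_smul _ _ _, Finset.sum_sub_distrib, ← Finset.smul_sum, hDμ0 x, smul_zero, sub_zero]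
  refine ⟨(hVdiff x0) θ, hfinal, ?_⟩
  rw [hfinal]
  exact tsum_congr fun k => congrArg (γ ^ k • ·)
    (Finset.sum_congr rfl fun x _ => congrArg (((Pθ θ) ^ k) x0 x • ·) (hAdvQ x).symm)
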